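/- Let G be a graph of corner rank ∞. Then for every vertex c of G there exists a vertex r with cr(r) = ∞ such that some c' ∈ F_∞(c) is not adjacent to r (i.e. an ∞-proj-safe vertex exists no matter where the cop stands). -/

import Mathlib

open Classical

/-- A finite reflexive graph: adjacency is symmetric and every vertex is
adjacent to itself (closed neighborhood `N[v] = {u | Adj v u}`). -/
structure RefGraph (V : Type*) where
  Adj : V → V → Prop
  symm : ∀ u v, Adj u v → Adj v u
  refl : ∀ v, Adj v v

namespace RefGraph

variable {V : Type*}

/-- `w` strictly corners `v` within the induced subgraph on `S`,
i.e. `N_S[v] ⊊ N_S[w]`. -/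
def StrictCornersIn (G : RefGraph V) (S : Set V) (w v : V) : Prop :=
  w ∈ S ∧ v ∈ S ∧ (∀ u ∈ S, G.Adj v u → G.Adj w u) ∧ ∃ u ∈ S, G.Adj w u ∧ ¬ G.Adj v u

/-- `v` is a strict corner of the induced subgraph on `S`. -/
def IsStrictCorner (G : RefGraph V) (S : Set V) (v : V) : Prop :=
  ∃ w, G.StrictCornersIn S w v

/-- `S` induces a clique. -/
def IsCliqueSet (G : RefGraph V) (S : Set V) : Prop :=
  ∀ u ∈ S, ∀ v ∈ S, G.Adj u v

/-- `lvl k` is the vertex set of the graph `G_{k+1}` of the corner ranking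
procedure: start with all vertices and repeatedly delete all strict corners. -/
def lvl (G : RefGraph V) : ℕ → Set V
  | 0 => Set.univ
  | k + 1 => {v ∈ G.lvl k | ¬ G.IsStrictCorner (G.lvl k) v}

/-- The corner rank of a vertex: the stage (1-indexed) at which it is a strict
corner, or at which the remaining graph is a clique; `∞` if neither ever occurs. -/
noncomputable def cr (G : RefGraph V) (v : V) : ℕ∞ :=
  sInf {n : ℕ∞ | ∃ m : ℕ, n = (m : ℕ∞) + 1 ∧ v ∈ G.lvl m ∧
    (G.IsStrictCorner (G.lvl m) v ∨ G.IsCliqueSet (G.lvl m))}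

/-- The vertex set of `Gₖ`: the vertices of corner rank at least `k`. -/
def GkSet (G : RefGraph V) (k : ℕ) : Set V := {v | (k : ℕ∞) ≤ G.cr v}

/-- The corner rank of the graph: the largest corner rank of a vertex. -/
noncomputable def crGraph (G : RefGraph V) [Fintype V] : ℕ∞ :=
  Finset.univ.sup fun v => G.cr v

/-- The projection map `fₖ` on a single vertex `u` of `Gₖ`. -/
noncomputable def fk (G : RefGraph V) (k : ℕ) (u : V) : Set V :=
  if (k : ℕ∞) < G.cr u then {u}
  else {w | w ∈ G.GkSet (k + 1) ∧ G.StrictCornersIn (G.GkSet k) w u}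

/-- The projection map `Fₖ`: `F₁` is the identity and `Fₖ₊₁ = fₖ ∘ Fₖ`. -/
noncomputable def Fk (G : RefGraph V) : ℕ → V → Set V
  | 0, v => {v}
  | 1, v => {v}
  | k + 2, v => ⋃ u ∈ G.Fk (k + 1) v, G.fk (k + 1) u

/-- `r` is `k`-cornered by `c`: for `k = 0`, `c = r`; for `k ≥ 1`, some
`r' ∈ Fₖ(r)` is cornered by `c` in the subgraph induced by `V(Gₖ) ∪ {c}`. -/
def kCornered (G : RefGraph V) : ℕ → V → V → Prop
  | 0, c, r => c = r
  | k + 1, c, r => ∃ r' ∈ G.Fk (k + 1) r,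
      ∀ u, (u ∈ G.GkSet (k + 1) ∨ u = c) → G.Adj r' u → G.Adj c u

/-- With the cop at `c`, the vertex `r` is `k`-proj-safe: `cr r ≥ k` and some
`c' ∈ Fₖ(c)` is not adjacent to `r`. -/
def ProjSafe (G : RefGraph V) (k : ℕ) (c r : V) : Prop :=
  (k : ℕ∞) ≤ G.cr r ∧ ∃ c' ∈ G.Fk k c, ¬ G.Adj c' r

/-- The cop at `c` can win within `k` cop moves against the robber at `r`,
robber to move. -/
def WinWithin (G : RefGraph V) : ℕ → V → V → Prop
  | 0, c, r => c = r
  | k + 1, c, r => c = r ∨ ∀ r₁, G.Adj r r₁ → ∃ c₁, G.Adj c c₁ ∧ G.WinWithin k c₁ r₁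

/-- The cop at `c` can guarantee catching the robber at `r` within `n` cop
moves, cop to move. -/
def CanCatch (G : RefGraph V) : ℕ → V → V → Prop
  | 0, c, r => c = r
  | n + 1, c, r => c = r ∨ ∃ c', G.Adj c c' ∧
      (c' = r ∨ ∀ r', G.Adj r r' → G.CanCatch n c' r')

/-- The cop has a winning strategy: some initial placement from which she can
guarantee capture in some bounded number of moves, whatever the robber does. -/
def CopWin (G : RefGraph V) : Prop :=
  ∃ (n : ℕ) (c₀ : V), ∀ r₀ : V, G.CanCatch n c₀ r₀

/-- The capture time: the least `n` such that the cop has an initial placement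
guaranteeing capture within `n` cop moves. -/
noncomputable def capt (G : RefGraph V) : ℕ :=
  sInf {n : ℕ | ∃ c₀ : V, ∀ r₀ : V, G.CanCatch n c₀ r₀}

/-- A graph of finite corner rank `α` is `1`-cop-win if some vertex of corner
rank `α` is adjacent to every vertex of `G_{α-1}`. -/
def OneCopWin (G : RefGraph V) (α : ℕ) : Prop :=
  ∃ x, G.cr x = (α : ℕ∞) ∧ ∀ u, ((α - 1 : ℕ) : ℕ∞) ≤ G.cr u → G.Adj x u

/-- `r`-cop-win for `r ∈ {0,1}`. -/
def RCopWin (G : RefGraph V) (r α : ℕ) : Prop :=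
  (r = 1 ∧ G.OneCopWin α) ∨ (r = 0 ∧ ¬ G.OneCopWin α)

/-- The largest finite corner rank occurring in `G` (0 if none occurs). -/
noncomputable def gammaMax (G : RefGraph V) : ℕ :=
  sSup {n : ℕ | ∃ v, G.cr v = (n : ℕ∞)}

/-- `F_∞`: equal to `F_{γ+1}` where `γ` is the largest finite corner rank, and
the identity (`F₁`) when no vertex has finite corner rank. -/
noncomputable def Finf (G : RefGraph V) : V → Set V :=
  G.Fk (G.gammaMax + 1)

/-- `e` lists the vertices as a dismantling ordering: every vertex except the
last is cornered, in the induced subgraph on it and the later vertices, by some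
later vertex. -/
def IsDismantlingOrdering (G : RefGraph V) {n : ℕ} (e : Fin n ≃ V) : Prop :=
  ∀ i : Fin n, (i : ℕ) + 1 < n →
    ∃ j : Fin n, i < j ∧ e j ≠ e i ∧
      ∀ u, (∃ m : Fin n, i ≤ m ∧ e m = u) → G.Adj (e i) u → G.Adj (e j) u

/-- `G` has a dismantling ordering. -/
def HasDismantling (G : RefGraph V) [Fintype V] : Prop :=
  ∃ e : Fin (Fintype.card V) ≃ V, G.IsDismantlingOrdering e

end RefGraph

/-! ### Auxiliary lemmas for the proof -/

namespace RefGraph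

variable {V : Type*} (G : RefGraph V)

lemma lvl_succ_subset' (k : ℕ) : G.lvl (k+1) ⊆ G.lvl k := fun _ hv => hv.1

lemma lvl_subset_of_le' {j k : ℕ} (h : j ≤ k) : G.lvl k ⊆ G.lvl j := by
  induction k with
  | zero => obtain rfl : j = 0 := Nat.le_zero.mp h; exact fun v hv => hv
  | succ k ih =>
    rcases Nat.eq_or_lt_of_le h with rfl | h'
    · exact fun v hv => hv
    · exact fun v hv => ih (Nat.lt_succ_iff.mp h') (G.lvl_succ_subset' k hv)

lemma coe_add_one_ne_top' (k : ℕ) : ((k : ℕ∞) + 1) ≠ ⊤ := by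
  rw [show ((k : ℕ∞) + 1) = ((k + 1 : ℕ) : ℕ∞) by push_cast; ring]
  exact ENat.coe_ne_top _

/-- The set of stages at which `v` is a strict corner or the level is a clique. -/
def crM (v : V) : Set ℕ :=
  {m | v ∈ G.lvl m ∧ (G.IsStrictCorner (G.lvl m) v ∨ G.IsCliqueSet (G.lvl m))}

lemma cr_le_of_mem' {v : V} {m : ℕ} (h : m ∈ G.crM v) : G.cr v ≤ (m : ℕ∞) + 1 :=
  sInf_le ⟨m, rfl, h.1, h.2⟩

lemma cr_finite' {v : V} (h : G.cr v ≠ ⊤) :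
    ∃ m : ℕ, G.cr v = (m : ℕ∞) + 1 ∧ m ∈ G.crM v := by
  have hne : (G.crM v).Nonempty := by
    by_contra hmt
    rw [Set.not_nonempty_iff_eq_empty] at hmt
    apply h
    have : {n : ℕ∞ | ∃ m : ℕ, n = (m : ℕ∞) + 1 ∧ v ∈ G.lvl m ∧
        (G.IsStrictCorner (G.lvl m) v ∨ G.IsCliqueSet (G.lvl m))} = ∅ := by
      ext n
      simp only [Set.mem_setOf_eq, Set.mem_empty_iff_false, iff_false, not_exists]
      rintro m ⟨rfl, h1, h2⟩
      exact absurd (Set.eq_empty_iff_forall_notMem.mp hmt m) (by simp [crM, h1, h2])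
    rw [cr, this, sInf_empty]
  refine ⟨sInf (G.crM v), le_antisymm (G.cr_le_of_mem' (Nat.sInf_mem hne)) ?_,
    Nat.sInf_mem hne⟩
  apply le_sInf
  rintro n ⟨m, rfl, h1, h2⟩
  have : sInf (G.crM v) ≤ m := Nat.sInf_le ⟨h1, h2⟩
  exact add_le_add_left (Nat.cast_le.mpr this) 1

lemma mem_lvl_of_le_cr' {v : V} : ∀ k : ℕ, ((k : ℕ∞) + 1) ≤ G.cr v → v ∈ G.lvl k := by
  intro k
  induction k with
  | zero => intro _; exact Set.mem_univ v
  | succ k ih =>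
    intro h
    have hle : ((k : ℕ∞) + 1) ≤ ((k : ℕ∞) + 1) + 1 := le_self_add
    have hcast : (((k+1 : ℕ)) : ℕ∞) + 1 = ((k : ℕ∞) + 1) + 1 := by push_cast; ring
    rw [hcast] at h
    have hv : v ∈ G.lvl k := ih (le_trans hle h)
    refine ⟨hv, fun hc => ?_⟩
    have h2 := G.cr_le_of_mem' (v := v) (m := k) ⟨hv, Or.inl hc⟩
    have h3 : ((k : ℕ∞) + 1) + 1 ≤ (k : ℕ∞) + 1 := le_trans h h2
    have h4 : ((k : ℕ∞) + 1) < ((k : ℕ∞) + 1) + 1 :=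
      (ENat.lt_add_one_iff (coe_add_one_ne_top' k)).mpr le_rfl
    exact absurd h3 (not_le.mpr h4)

lemma cr_top_mem_lvl' {v : V} (h : G.cr v = ⊤) (k : ℕ) : v ∈ G.lvl k :=
  G.mem_lvl_of_le_cr' k (by rw [h]; exact le_top)

lemma noClique' (hT : ∃ v, G.cr v = ⊤) (m : ℕ) : ¬ G.IsCliqueSet (G.lvl m) := by
  obtain ⟨v, hv⟩ := hT
  intro hc
  have h1 := G.cr_le_of_mem' (v := v) (m := m) ⟨G.cr_top_mem_lvl' hv m, Or.inr hc⟩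
  rw [hv] at h1
  exact coe_add_one_ne_top' m (top_le_iff.mp h1)

lemma mem_lvl_iff_cr' (hT : ∃ v, G.cr v = ⊤) {v : V} (k : ℕ) :
    v ∈ G.lvl k ↔ ((k : ℕ∞) + 1) ≤ G.cr v := by
  refine ⟨fun hv => ?_, G.mem_lvl_of_le_cr' k⟩
  by_cases htop : G.cr v = ⊤
  · rw [htop]; exact le_top
  obtain ⟨m, hm, hmem⟩ := G.cr_finite' htop
  rcases Nat.lt_or_ge m k with hlt | hge
  · exfalso
    have hv' : v ∈ G.lvl (m+1) := G.lvl_subset_of_le' hlt hv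
    rcases hmem.2 with hcor | hcl
    · exact hv'.2 hcor
    · exact G.noClique' hT m hcl
  · rw [hm]
    exact add_le_add_left (Nat.cast_le.mpr hge) 1

lemma gkset_succ' (hT : ∃ v, G.cr v = ⊤) (k : ℕ) : G.GkSet (k+1) = G.lvl k := by
  ext v
  rw [GkSet, Set.mem_setOf_eq, G.mem_lvl_iff_cr' hT k]
  constructor <;> intro h <;> [skip; skip] <;>
    · refine le_trans (le_of_eq ?_) h
      push_cast; ring

lemma exists_high_cornerer' [Fintype V] {k : ℕ} {u : V}
    (hcor : G.IsStrictCorner (G.lvl k) u) :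
    ∃ w ∈ G.lvl (k+1), G.StrictCornersIn (G.lvl k) w u := by
  classical
  set A := {w | G.StrictCornersIn (G.lvl k) w u} with hA
  have hAne : A.Nonempty := hcor
  obtain ⟨w, hwA, hmax⟩ := Set.Finite.exists_maximalFor
    (fun w => ({x | x ∈ G.lvl k ∧ G.Adj w x}).ncard) A (Set.toFinite A) hAne
  refine ⟨w, ⟨hwA.1, fun hc => ?_⟩, hwA⟩
  obtain ⟨w2, hw2⟩ := hc
  have hw2A : w2 ∈ A := by
    obtain ⟨hw2k, hwk, hsub, y, hy, hay, hnay⟩ := hw2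
    obtain ⟨hwk', huk, hsubu, x, hx, hax, hnax⟩ := hwA
    exact ⟨hw2k, huk, fun z hz hz2 => hsub z hz (hsubu z hz hz2),
      x, hx, hsub x hx hax, hnax⟩
  have hss : {x | x ∈ G.lvl k ∧ G.Adj w x} ⊂ {x | x ∈ G.lvl k ∧ G.Adj w2 x} := by
    constructor
    · rintro z ⟨hz, haz⟩
      exact ⟨hz, hw2.2.2.1 z hz haz⟩
    · intro hsup
      obtain ⟨_, _, _, y, hy, hay, hnay⟩ := hw2
      exact hnay (hsup ⟨hy, hay⟩).2
  have h1 := Set.ncard_lt_ncard hss (Set.toFinite _)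
  have h2 := hmax (j := w2) hw2A (le_of_lt h1)
  simp only at h2
  omega

lemma Fk_good' [Fintype V] (hT : ∃ v, G.cr v = ⊤) (c : V) :
    ∀ k, (G.Fk (k+1) c).Nonempty ∧ G.Fk (k+1) c ⊆ G.lvl k := by
  intro k
  induction k with
  | zero => exact ⟨⟨c, rfl⟩, fun v _ => Set.mem_univ v⟩
  | succ k ih =>
    have hdef : G.Fk (k+2) c = ⋃ u ∈ G.Fk (k+1) c, G.fk (k+1) u := rfl
    have fk_sub : ∀ u ∈ G.Fk (k+1) c, G.fk (k+1) u ⊆ G.lvl (k+1) := by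
      intro u hu w hw
      by_cases hlt : ((k+1 : ℕ) : ℕ∞) < G.cr u
      · rw [fk, if_pos hlt] at hw
        rw [Set.mem_singleton_iff] at hw
        rw [hw]
        apply G.mem_lvl_of_le_cr' (k+1)
        have h5 : ((k+1 : ℕ) : ℕ∞) + 1 ≤ G.cr u :=
          (ENat.add_one_le_iff (ENat.coe_ne_top (k+1))).mpr hlt
        refine le_trans (le_of_eq ?_) h5
        push_cast; ring
      · rw [fk, if_neg hlt] at hw
        rw [← G.gkset_succ' hT (k+1)]
        exact hw.1
    constructor
    · obtain ⟨u, hu⟩ := ih.1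
      have hucr : ((k : ℕ∞) + 1) ≤ G.cr u := (G.mem_lvl_iff_cr' hT k).mp (ih.2 hu)
      by_cases hlt : ((k+1 : ℕ) : ℕ∞) < G.cr u
      · refine ⟨u, ?_⟩
        rw [hdef]
        refine Set.mem_biUnion hu ?_
        rw [fk, if_pos hlt]
        exact rfl
      · have h1 : G.cr u ≤ ((k+1 : ℕ) : ℕ∞) := not_lt.mp hlt
        have h2 : ((k+1 : ℕ) : ℕ∞) ≤ G.cr u := by
          refine le_trans (le_of_eq ?_) hucr
          push_cast; ring
        have heq : G.cr u = ((k+1 : ℕ) : ℕ∞) := le_antisymm h1 h2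
        have hne : G.cr u ≠ ⊤ := ne_top_of_le_ne_top (ENat.coe_ne_top (k+1)) h1
        obtain ⟨m, hm, hmem⟩ := G.cr_finite' hne
        have hmk : m = k := by
          rw [heq] at hm
          have : ((k+1 : ℕ) : ℕ∞) = ((m+1 : ℕ) : ℕ∞) := by
            rw [hm]; push_cast; ring
          have := Nat.cast_inj.mp this
          omega
        rw [hmk] at hmem
        rcases hmem.2 with hcor | hcl
        · obtain ⟨w, hwlvl, hwcor⟩ := G.exists_high_cornerer' hcor
          refine ⟨w, ?_⟩
          rw [hdef]
          refine Set.mem_biUnion hu ?_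
          rw [fk, if_neg hlt]
          refine ⟨?_, ?_⟩
          · rw [G.gkset_succ' hT (k+1)]; exact hwlvl
          · rw [G.gkset_succ' hT k]; exact hwcor
        · exact absurd hcl (G.noClique' hT k)
    · intro w hw
      rw [hdef] at hw
      simp only [Set.mem_iUnion, exists_prop] at hw
      obtain ⟨u, hu, hwu⟩ := hw
      exact fk_sub u hu hwu

lemma exists_stable' [Fintype V] : ∃ K, G.lvl (K+1) = G.lvl K := by
  by_contra h
  push_neg at h
  have hlt : ∀ k, (G.lvl (k+1)).ncard < (G.lvl k).ncard := by
    intro k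
    refine Set.ncard_lt_ncard ⟨G.lvl_succ_subset' k, fun hsup => ?_⟩ (Set.toFinite _)
    exact h k (Set.Subset.antisymm (G.lvl_succ_subset' k) hsup)
  have key : ∀ k, (G.lvl k).ncard + k ≤ (G.lvl 0).ncard := by
    intro k
    induction k with
    | zero => simp
    | succ k ih => have := hlt k; omega
  have := key ((G.lvl 0).ncard + 1)
  omega

lemma lvl_stable' {K : ℕ} (h : G.lvl (K+1) = G.lvl K) :
    ∀ j, G.lvl (K+j) = G.lvl K := by
  intro j
  induction j with
  | zero => rfl
  | succ j ih =>
    have : G.lvl (K + j + 1) = {v ∈ G.lvl (K+j) | ¬ G.IsStrictCorner (G.lvl (K+j)) v} :=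
      rfl
    rw [show K + (j+1) = K + j + 1 from rfl, this, ih]
    exact h

lemma top_set_eq' [Fintype V] (hT : ∃ v, G.cr v = ⊤) :
    ∃ K, {v | G.cr v = ⊤} = G.lvl K := by
  obtain ⟨K, hK⟩ := G.exists_stable'
  refine ⟨K, Set.Subset.antisymm (fun v hv => G.cr_top_mem_lvl' hv K) ?_⟩
  intro v hv
  by_contra htop
  obtain ⟨m, hm, hmem⟩ := G.cr_finite' htop
  rcases hmem.2 with hcor | hcl
  · have hv1 : v ∈ G.lvl (m+1) := by
      rcases Nat.lt_or_ge m K with hlt | hge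
      · exact G.lvl_subset_of_le' hlt hv
      · rw [show m + 1 = K + (m + 1 - K) from by omega, G.lvl_stable' hK]
        exact hv
    exact hv1.2 hcor
  · exact G.noClique' hT m hcl

end RefGraph

/-- If `G` has corner rank `∞`, then for every cop position `c`
there is an `∞`-proj-safe vertex: some `r` with `cr(r) = ∞` and some
`c' ∈ F_∞(c)` not adjacent to `r`. -/
theorem proj_safe_start_infinite_rank
    {V : Type*} [Fintype V] [Nonempty V] (G : RefGraph V)
    (hα : G.crGraph = ⊤) :
    ∀ c : V, ∃ r : V, G.cr r = ⊤ ∧ ∃ c' ∈ G.Finf c, ¬ G.Adj c' r := by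
  have hT : ∃ v, G.cr v = ⊤ := by
    obtain ⟨v, -, hv⟩ := Finset.exists_mem_eq_sup (Finset.univ : Finset V)
      Finset.univ_nonempty (fun v => G.cr v)
    rw [RefGraph.crGraph, hv] at hα
    exact ⟨v, hα⟩
  intro c
  obtain ⟨⟨c', hc'⟩, hsub⟩ := G.Fk_good' hT c G.gammaMax
  have hc'lvl : c' ∈ G.lvl G.gammaMax := hsub hc'
  have hc'cr : G.cr c' = ⊤ := by
    by_contra hne
    obtain ⟨m, hm, _⟩ := G.cr_finite' hne
    have hcrle : ((G.gammaMax : ℕ∞) + 1) ≤ G.cr c' :=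
      (G.mem_lvl_iff_cr' hT G.gammaMax).mp hc'lvl
    have hmem : (m + 1) ∈ {n : ℕ | ∃ v, G.cr v = (n : ℕ∞)} := by
      refine ⟨c', ?_⟩
      rw [hm]; push_cast; ring
    have hbdd : BddAbove {n : ℕ | ∃ v, G.cr v = (n : ℕ∞)} := by
      refine Set.Finite.bddAbove (Set.Finite.subset
        (Set.finite_range (fun v : V => (G.cr v).toNat)) ?_)
      rintro n ⟨v, hv⟩
      exact ⟨v, by show (G.cr v).toNat = n; rw [hv]; simp⟩
    have h1 : m + 1 ≤ G.gammaMax := le_csSup hbdd hmem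
    have h2 : (G.gammaMax : ℕ∞) + 1 ≤ (m : ℕ∞) + 1 := le_trans hcrle (le_of_eq hm)
    have h2' : ((G.gammaMax + 1 : ℕ) : ℕ∞) ≤ ((m + 1 : ℕ) : ℕ∞) := by
      push_cast; exact h2
    have h3 : G.gammaMax + 1 ≤ m + 1 := Nat.cast_le.mp h2'
    omega
  obtain ⟨K, hKeq⟩ := G.top_set_eq' hT
  by_contra hno
  push_neg at hno
  have hnc := G.noClique' hT K
  rw [RefGraph.IsCliqueSet] at hnc
  push_neg at hnc
  obtain ⟨u, hu, w, hw, huw⟩ := hnc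
  have hc'K : c' ∈ G.lvl K := by
    rw [← hKeq]; exact hc'cr
  have hadj : ∀ x ∈ G.lvl K, G.Adj c' x := by
    intro x hx
    have hx' : G.cr x = ⊤ := by rw [← Set.mem_setOf_eq (p := fun v => G.cr v = ⊤), hKeq]; exact hx
    exact hno x hx' c' hc'
  have hcor : G.IsStrictCorner (G.lvl K) u :=
    ⟨c', hc'K, hu, fun z hz _ => hadj z hz, w, hw, hadj w hw, huw⟩
  have hutop : G.cr u = ⊤ := by
    rw [← Set.mem_setOf_eq (p := fun v => G.cr v = ⊤), hKeq]; exact hu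
  have hle := G.cr_le_of_mem' (v := u) (m := K) ⟨hu, Or.inl hcor⟩
  rw [hutop] at hle
  exact RefGraph.coe_add_one_ne_top' K (top_le_iff.mp hle)
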